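/- The projectors P̃ and Q commute: Q P̃ Q = P̃ Q = Q P̃. -/

import Mathlib

abbrev Tens (N : ℕ) := Fin N → Fin N → Fin N → ℝ

noncomputable def ip {N : ℕ} (T U : Tens N) : ℝ := ∑ a, ∑ b, ∑ c, T a b c * U a b c

noncomputable def kd {N : ℕ} (i j : Fin N) : ℝ := if i = j then 1 else 0

/-- The mixed-symmetry Young symmetrizer for the tableau with rows {1,2} and {3}. -/
noncomputable def Smap (N : ℕ) : Tens N →ₗ[ℝ] Tens N where
  toFun T := fun a1 a2 a3 =>
    (1/3 : ℝ) * (T a1 a2 a3 + T a2 a1 a3 - T a3 a2 a1 - T a2 a3 a1)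
  map_add' T U := by funext a1 a2 a3; simp [Pi.add_apply]; ring
  map_smul' c T := by funext a1 a2 a3; simp [Pi.smul_apply, smul_eq_mul]; ring

/-- Kernel of the orthogonal projector onto completely traceless rank-3 tensors. -/
noncomputable def Qker (N : ℕ) (a1 a2 a3 b1 b2 b3 : Fin N) : ℝ :=
  kd a1 b1 * kd a2 b2 * kd a3 b3
  - ((N : ℝ)^2 + N - 2)⁻¹ *
    ( kd a1 a2 * (((N : ℝ)+1) * kd a3 b3 * kd b1 b2 - kd a3 b2 * kd b1 b3 - kd a3 b1 * kd b2 b3)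
    + kd a1 a3 * (-(kd a2 b3 * kd b1 b2) + ((N : ℝ)+1) * kd a2 b2 * kd b1 b3 - kd a2 b1 * kd b2 b3)
    + kd a2 a3 * (-(kd a1 b3 * kd b1 b2) - kd a1 b2 * kd b1 b3 + ((N : ℝ)+1) * kd a1 b1 * kd b2 b3))

noncomputable def Qmap (N : ℕ) : Tens N →ₗ[ℝ] Tens N where
  toFun T := fun a1 a2 a3 => ∑ b1, ∑ b2, ∑ b3, Qker N a1 a2 a3 b1 b2 b3 * T b1 b2 b3
  map_add' T U := by
    funext a1 a2 a3
    simp [Pi.add_apply, mul_add, Finset.sum_add_distrib]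
  map_smul' c T := by
    funext a1 a2 a3
    simp only [Pi.smul_apply, smul_eq_mul, Finset.mul_sum]
    refine Finset.sum_congr rfl fun b1 _ => Finset.sum_congr rfl fun b2 _ =>
      Finset.sum_congr rfl fun b3 _ => by simp only [RingHom.id_apply]; ring

/-! ### Auxiliary machinery -/

noncomputable def tr1 {N : ℕ} (T : Tens N) (c : Fin N) : ℝ := ∑ b, T b b c
noncomputable def tr2 {N : ℕ} (T : Tens N) (c : Fin N) : ℝ := ∑ b, T b c b
noncomputable def tr3 {N : ℕ} (T : Tens N) (c : Fin N) : ℝ := ∑ b, T c b b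

lemma kd_comm {N : ℕ} (i j : Fin N) : (kd i j : ℝ) = kd j i := by
  simp [kd, eq_comm]

lemma Qmap_apply {N : ℕ} (T : Tens N) (a1 a2 a3 : Fin N) :
    Qmap N T a1 a2 a3
    = T a1 a2 a3 - ((N : ℝ)^2 + N - 2)⁻¹ *
      ( kd a1 a2 * (((N : ℝ)+1) * tr1 T a3 - tr2 T a3 - tr3 T a3)
      + kd a1 a3 * (-(tr1 T a2) + ((N : ℝ)+1) * tr2 T a2 - tr3 T a2)
      + kd a2 a3 * (-(tr1 T a1) - tr2 T a1 + ((N : ℝ)+1) * tr3 T a1)) := by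
  show ∑ b1, ∑ b2, ∑ b3, Qker N a1 a2 a3 b1 b2 b3 * T b1 b2 b3 = _
  simp only [Qker, sub_mul, add_mul, mul_assoc, neg_mul, sub_eq_add_neg, neg_add,
    Finset.sum_add_distrib, Finset.sum_neg_distrib, ← Finset.mul_sum]
  simp [kd, ite_mul, mul_ite, tr1, tr2, tr3, Finset.mul_sum]

lemma sum_kd_diag (N : ℕ) : ∑ b : Fin N, (kd b b : ℝ) = N := by
  simp [kd]

lemma sum_kd_mul {N : ℕ} (c : Fin N) (f : Fin N → ℝ) : ∑ b, kd b c * f b = f c := by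
  simp [kd, ite_mul, eq_comm]

lemma sum_aux {N : ℕ} (c : Fin N) (X lam : ℝ) (g f : Fin N → ℝ) :
    ∑ b, (f b - lam * (kd b b * X + kd b c * g b))
    = (∑ b, f b) - lam * ((N : ℝ) * X + g c) := by
  rw [Finset.sum_sub_distrib, ← Finset.mul_sum, Finset.sum_add_distrib,
    ← Finset.sum_mul, sum_kd_diag, sum_kd_mul]

section traceless
variable {N : ℕ} (T : Tens N)

lemma nz (hN : 2 ≤ N) : ((N : ℝ)^2 + N - 2) ≠ 0 := by
  have h2 : (2:ℝ) ≤ (N:ℝ) := by exact_mod_cast hN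
  nlinarith

lemma tr1_Qmap (hN : 2 ≤ N) (c : Fin N) : tr1 (Qmap N T) c = 0 := by
  have h1 : ∀ b : Fin N, Qmap N T b b c
      = T b b c - ((N : ℝ)^2 + N - 2)⁻¹ *
        (kd b b * (((N : ℝ)+1) * tr1 T c - tr2 T c - tr3 T c)
         + kd b c * ((-(tr1 T b) + ((N : ℝ)+1) * tr2 T b - tr3 T b)
                     + (-(tr1 T b) - tr2 T b + ((N : ℝ)+1) * tr3 T b))) := fun b => by
    rw [Qmap_apply]; ring
  have h2 : tr1 (Qmap N T) c = ∑ b, (T b b c - ((N : ℝ)^2 + N - 2)⁻¹ *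
        (kd b b * (((N : ℝ)+1) * tr1 T c - tr2 T c - tr3 T c)
         + kd b c * ((-(tr1 T b) + ((N : ℝ)+1) * tr2 T b - tr3 T b)
                     + (-(tr1 T b) - tr2 T b + ((N : ℝ)+1) * tr3 T b)))) :=
    Finset.sum_congr rfl fun b _ => h1 b
  rw [h2, sum_aux]
  have : (∑ b, T b b c) = tr1 T c := rfl
  rw [this]
  rw [sub_eq_zero, eq_comm, inv_mul_eq_iff_eq_mul₀ (nz hN)]
  ring

lemma tr2_Qmap (hN : 2 ≤ N) (c : Fin N) : tr2 (Qmap N T) c = 0 := by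
  have h1 : ∀ b : Fin N, Qmap N T b c b
      = T b c b - ((N : ℝ)^2 + N - 2)⁻¹ *
        (kd b b * (-(tr1 T c) + ((N : ℝ)+1) * tr2 T c - tr3 T c)
         + kd b c * ((((N : ℝ)+1) * tr1 T b - tr2 T b - tr3 T b)
                     + (-(tr1 T b) - tr2 T b + ((N : ℝ)+1) * tr3 T b))) := fun b => by
    rw [Qmap_apply, kd_comm c b]; ring
  have h2 : tr2 (Qmap N T) c = ∑ b, (T b c b - ((N : ℝ)^2 + N - 2)⁻¹ *
        (kd b b * (-(tr1 T c) + ((N : ℝ)+1) * tr2 T c - tr3 T c)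
         + kd b c * ((((N : ℝ)+1) * tr1 T b - tr2 T b - tr3 T b)
                     + (-(tr1 T b) - tr2 T b + ((N : ℝ)+1) * tr3 T b)))) :=
    Finset.sum_congr rfl fun b _ => h1 b
  rw [h2, sum_aux]
  have : (∑ b, T b c b) = tr2 T c := rfl
  rw [this]
  rw [sub_eq_zero, eq_comm, inv_mul_eq_iff_eq_mul₀ (nz hN)]
  ring

lemma tr3_Qmap (hN : 2 ≤ N) (c : Fin N) : tr3 (Qmap N T) c = 0 := by
  have h1 : ∀ b : Fin N, Qmap N T c b b
      = T c b b - ((N : ℝ)^2 + N - 2)⁻¹ *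
        (kd b b * (-(tr1 T c) - tr2 T c + ((N : ℝ)+1) * tr3 T c)
         + kd b c * ((((N : ℝ)+1) * tr1 T b - tr2 T b - tr3 T b)
                     + (-(tr1 T b) + ((N : ℝ)+1) * tr2 T b - tr3 T b))) := fun b => by
    rw [Qmap_apply, kd_comm c b]; ring
  have h2 : tr3 (Qmap N T) c = ∑ b, (T c b b - ((N : ℝ)^2 + N - 2)⁻¹ *
        (kd b b * (-(tr1 T c) - tr2 T c + ((N : ℝ)+1) * tr3 T c)
         + kd b c * ((((N : ℝ)+1) * tr1 T b - tr2 T b - tr3 T b)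
                     + (-(tr1 T b) + ((N : ℝ)+1) * tr2 T b - tr3 T b)))) :=
    Finset.sum_congr rfl fun b _ => h1 b
  rw [h2, sum_aux]
  have : (∑ b, T c b b) = tr3 T c := rfl
  rw [this]
  rw [sub_eq_zero, eq_comm, inv_mul_eq_iff_eq_mul₀ (nz hN)]
  ring

lemma Qmap_idem (hN : 2 ≤ N) (T : Tens N) : Qmap N (Qmap N T) = Qmap N T := by
  funext a1 a2 a3
  rw [Qmap_apply (Qmap N T)]
  simp only [tr1_Qmap T hN, tr2_Qmap T hN, tr3_Qmap T hN]
  ring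

end traceless

/-- Explicit formula for the adjoint of `Smap`. -/
noncomputable def Tmap (N : ℕ) : Tens N →ₗ[ℝ] Tens N where
  toFun U := fun a1 a2 a3 =>
    (1/3 : ℝ) * (U a1 a2 a3 + U a2 a1 a3 - U a3 a2 a1 - U a3 a1 a2)
  map_add' T U := by funext a1 a2 a3; simp [Pi.add_apply]; ring
  map_smul' c T := by funext a1 a2 a3; simp [Pi.smul_apply, smul_eq_mul]; ring

lemma tr1_Smap {N : ℕ} (T : Tens N) (c : Fin N) :
    tr1 (Smap N T) c = (1/3 : ℝ) * (2 * tr1 T c - tr2 T c - tr3 T c) := by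
  simp only [Smap, LinearMap.coe_mk, AddHom.coe_mk, tr1, tr2, tr3, mul_add, mul_sub,
    Finset.sum_sub_distrib, Finset.sum_add_distrib, ← Finset.mul_sum]
  ring

lemma tr2_Smap {N : ℕ} (T : Tens N) (c : Fin N) : tr2 (Smap N T) c = 0 := by
  simp only [Smap, LinearMap.coe_mk, AddHom.coe_mk, tr2, mul_add, mul_sub,
    Finset.sum_sub_distrib, Finset.sum_add_distrib, ← Finset.mul_sum]
  ring

lemma tr3_Smap {N : ℕ} (T : Tens N) (c : Fin N) :
    tr3 (Smap N T) c = (1/3 : ℝ) * (tr2 T c + tr3 T c - 2 * tr1 T c) := by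
  simp only [Smap, LinearMap.coe_mk, AddHom.coe_mk, tr1, tr2, tr3, mul_add, mul_sub,
    Finset.sum_sub_distrib, Finset.sum_add_distrib, ← Finset.mul_sum]
  ring

lemma tr1_Tmap {N : ℕ} (T : Tens N) (c : Fin N) :
    tr1 (Tmap N T) c = (1/3 : ℝ) * (2 * tr1 T c - 2 * tr3 T c) := by
  simp only [Tmap, LinearMap.coe_mk, AddHom.coe_mk, tr1, tr2, tr3, mul_add, mul_sub,
    Finset.sum_sub_distrib, Finset.sum_add_distrib, ← Finset.mul_sum]
  ring

lemma tr2_Tmap {N : ℕ} (T : Tens N) (c : Fin N) :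
    tr2 (Tmap N T) c = (1/3 : ℝ) * (tr3 T c - tr1 T c) := by
  simp only [Tmap, LinearMap.coe_mk, AddHom.coe_mk, tr1, tr2, tr3, mul_add, mul_sub,
    Finset.sum_sub_distrib, Finset.sum_add_distrib, ← Finset.mul_sum]
  ring

lemma tr3_Tmap {N : ℕ} (T : Tens N) (c : Fin N) :
    tr3 (Tmap N T) c = (1/3 : ℝ) * (tr3 T c - tr1 T c) := by
  simp only [Tmap, LinearMap.coe_mk, AddHom.coe_mk, tr1, tr2, tr3, mul_add, mul_sub,
    Finset.sum_sub_distrib, Finset.sum_add_distrib, ← Finset.mul_sum]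
  ring

lemma QS_comm {N : ℕ} (T : Tens N) : Qmap N (Smap N T) = Smap N (Qmap N T) := by
  funext a1 a2 a3
  have hR : Smap N (Qmap N T) a1 a2 a3
      = (1/3 : ℝ) * (Qmap N T a1 a2 a3 + Qmap N T a2 a1 a3
          - Qmap N T a3 a2 a1 - Qmap N T a2 a3 a1) := rfl
  have hL : Smap N T a1 a2 a3
      = (1/3 : ℝ) * (T a1 a2 a3 + T a2 a1 a3 - T a3 a2 a1 - T a2 a3 a1) := rfl
  rw [Qmap_apply (Smap N T) a1 a2 a3, hR, Qmap_apply T a1 a2 a3, Qmap_apply T a2 a1 a3,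
    Qmap_apply T a3 a2 a1, Qmap_apply T a2 a3 a1, hL]
  simp only [tr1_Smap, tr2_Smap, tr3_Smap, kd_comm a2 a1, kd_comm a3 a1, kd_comm a3 a2]
  ring

lemma QT_comm {N : ℕ} (T : Tens N) : Qmap N (Tmap N T) = Tmap N (Qmap N T) := by
  funext a1 a2 a3
  have hR : Tmap N (Qmap N T) a1 a2 a3
      = (1/3 : ℝ) * (Qmap N T a1 a2 a3 + Qmap N T a2 a1 a3
          - Qmap N T a3 a2 a1 - Qmap N T a3 a1 a2) := rfl
  have hL : Tmap N T a1 a2 a3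
      = (1/3 : ℝ) * (T a1 a2 a3 + T a2 a1 a3 - T a3 a2 a1 - T a3 a1 a2) := rfl
  rw [Qmap_apply (Tmap N T) a1 a2 a3, hR, Qmap_apply T a1 a2 a3, Qmap_apply T a2 a1 a3,
    Qmap_apply T a3 a2 a1, Qmap_apply T a3 a1 a2, hL]
  simp only [tr1_Tmap, tr2_Tmap, tr3_Tmap, kd_comm a2 a1, kd_comm a3 a1, kd_comm a3 a2]
  ring

noncomputable def dtens {N : ℕ} (x y z : Fin N) : Tens N := fun a b c => kd x a * kd y b * kd z c

lemma ip_dtens {N : ℕ} (x y z : Fin N) (U : Tens N) : ip (dtens x y z) U = U x y z := by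
  simp [ip, dtens, kd, ite_mul]

lemma ip_S_dtens {N : ℕ} (x y z : Fin N) (U : Tens N) :
    ip (Smap N (dtens x y z)) U
    = (1/3 : ℝ) * (U x y z + U y x z - U z y x - U z x y) := by
  simp only [ip, Smap, LinearMap.coe_mk, AddHom.coe_mk, dtens, mul_comm ((1:ℝ)/3),
    sub_mul, add_mul, Finset.sum_add_distrib, Finset.sum_sub_distrib]
  simp [kd, ite_mul, mul_assoc]
  ring

lemma St_eq {N : ℕ} (St : Tens N →ₗ[ℝ] Tens N)
    (hSt : ∀ T U : Tens N, ip (Smap N T) U = ip T (St U)) : St = Tmap N := by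
  apply LinearMap.ext; intro U
  funext x y z
  have h := hSt (dtens x y z) U
  rw [ip_S_dtens, ip_dtens] at h
  exact h.symm

theorem Ptilde_Qmap_commute (N : ℕ) (hN : 2 ≤ N) (St : Tens N →ₗ[ℝ] Tens N)
    (hSt : ∀ T U : Tens N, ip (Smap N T) U = ip T (St U)) :
    Qmap N ∘ₗ ((3/4 : ℝ) • (Smap N ∘ₗ St)) ∘ₗ Qmap N
        = ((3/4 : ℝ) • (Smap N ∘ₗ St)) ∘ₗ Qmap N ∧
    ((3/4 : ℝ) • (Smap N ∘ₗ St)) ∘ₗ Qmap N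
        = Qmap N ∘ₗ ((3/4 : ℝ) • (Smap N ∘ₗ St)) := by
  have hEq := St_eq St hSt
  subst hEq
  constructor
  · apply LinearMap.ext; intro T
    simp only [LinearMap.comp_apply, LinearMap.smul_apply, map_smul]
    rw [QS_comm, QT_comm, Qmap_idem hN]
  · apply LinearMap.ext; intro T
    simp only [LinearMap.comp_apply, LinearMap.smul_apply, map_smul]
    rw [QS_comm, QT_comm]
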